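/- arXiv:1011.4505 — 2 statements merged into one kernel-verified Lean document; each statement's English description precedes it below -/
import Mathlib

section
/- Let S be a finite group, Q and R subgroups of S, and φ : Q → S, ψ : R → S injective group homomorphisms. Set Δ_Q^φ = {(u, φ(u)) : u ∈ Q} ≤ S × S and similarly Δ_R^ψ. Then the number of Δ_R^ψ-fixed points of the left coset space (S × S)/Δ_Q^φ equals (|N_{ψ,φ}| / |Q|) · |C_S(ψ(R))|, where N_{ψ,φ} = {x ∈ S : xRx⁻¹ ≤ Q and there exists y ∈ S with φ(x r x⁻¹) = y ψ(r) y⁻¹ for all r ∈ R}. -/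
/-- The number of `Δ_R^ψ`-fixed points of the coset space `(S × S) ⧸ Δ_Q^φ` equals
`(|N_{ψ,φ}| / |Q|) · |C_S(ψ(R))|`, stated in the multiplied-out form
`|fixed points| · |Q| = |N_{ψ,φ}| · |C_S(ψ(R))|`. -/
theorem card_fixed_points_transitive_biset (S : Type*) [Group S] [Finite S]
    (Q R : Subgroup S) (φ : Q →* S) (ψ : R →* S)
    (hφ : Function.Injective φ) (hψ : Function.Injective ψ) :
    Nat.card (MulAction.fixedPoints (↥(R.subtype.prod ψ).range)
        ((S × S) ⧸ (Q.subtype.prod φ).range)) * Nat.card Q =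
      Nat.card {x : S | ∃ y : S, ∀ r : R,
          ∃ q : Q, (q : S) = x * r * x⁻¹ ∧ φ q = y * ψ r * y⁻¹} *
        Nat.card (Subgroup.centralizer (ψ.range : Set S)) := by
  classical
  set Δ : Subgroup (S × S) := (Q.subtype.prod φ).range with hΔdef
  set D : Subgroup (S × S) := (R.subtype.prod ψ).range with hDdef
  set N : Set S := {x : S | ∃ y : S, ∀ r : R,
      ∃ q : Q, (q : S) = x * r * x⁻¹ ∧ φ q = y * ψ r * y⁻¹} with hNdef
  set C : Subgroup S := Subgroup.centralizer (ψ.range : Set S) with hCdef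
  set t : Set ((S × S) ⧸ Δ) :=
    MulAction.fixedPoints (↥D) ((S × S) ⧸ Δ) with htdef
  set F : Set (S × S) := {p | ∀ r : R,
      ∃ q : Q, (q : S) = p.1 * r * p.1⁻¹ ∧ φ q = p.2 * ψ r * p.2⁻¹} with hFdef
  set F' : Set (S × S) := {p | ∀ r : R,
      ∃ q : Q, (q : S) = p.1⁻¹ * r * p.1 ∧ φ q = p.2⁻¹ * ψ r * p.2} with hF'def
  -- Step 1: the preimage of the fixed-point set under the quotient map is `F'`
  have hpre : QuotientGroup.mk ⁻¹' t = F' := by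
    ext p
    simp only [Set.mem_preimage, htdef, MulAction.mem_fixedPoints]
    constructor
    · intro h r
      have hd : (((r⁻¹ : R) : S), ψ r⁻¹) ∈ D := ⟨r⁻¹, rfl⟩
      have h1 := h ⟨_, hd⟩
      change (((r⁻¹ : R) : S), ψ r⁻¹) • (p : (S × S) ⧸ Δ) = p at h1
      rw [MulAction.Quotient.smul_mk] at h1
      have h2 : ((((r⁻¹ : R) : S), ψ r⁻¹) • p)⁻¹ * p ∈ Δ := QuotientGroup.eq.mp h1
      simp only [smul_eq_mul, mul_inv_rev, Prod.inv_mk, Prod.mk_mul_mk, map_inv, inv_inv] at h2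
      obtain ⟨q, hq⟩ := h2
      have hq1 : (q : S) = p.1⁻¹ * r * p.1 := by
        have := congrArg Prod.fst hq
        simpa [mul_assoc] using this
      have hq2 : φ q = p.2⁻¹ * ψ r * p.2 := by
        have := congrArg Prod.snd hq
        simpa [mul_assoc] using this
      exact ⟨q, hq1, hq2⟩
    · intro h d
      obtain ⟨r, hr⟩ := d.2
      change (d : S × S) • (p : (S × S) ⧸ Δ) = p
      rw [MulAction.Quotient.smul_mk]
      rw [QuotientGroup.eq]
      obtain ⟨q, hq1, hq2⟩ := h r⁻¹
      refine ⟨q, ?_⟩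
      have hd : (d : S × S) = ((r : S), ψ r) := hr.symm
      rw [Prod.ext_iff]
      constructor
      · simp only [MonoidHom.prod_apply, Subgroup.coe_subtype, hd, smul_eq_mul,
          mul_inv_rev, Prod.inv_mk, Prod.mk_mul_mk, Prod.fst_mul, Prod.snd_mul]
        rw [hq1]; simp [mul_assoc]
      · simp only [MonoidHom.prod_apply, Subgroup.coe_subtype, hd, smul_eq_mul,
          mul_inv_rev, Prod.inv_mk, Prod.mk_mul_mk, Prod.fst_mul, Prod.snd_mul]
        rw [hq2]; simp [mul_assoc]
  -- Step 2: `F'` is in bijection with `F` via inversion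
  have hF'F : Nat.card F' = Nat.card F := by
    refine Nat.card_congr (Equiv.subtypeEquiv (Equiv.inv (S × S)) fun p => ?_)
    simp only [hF'def, hFdef, Set.mem_setOf_eq, Equiv.inv_apply, Prod.fst_inv, Prod.snd_inv,
      inv_inv]
  -- Step 3: cardinality of Δ is the cardinality of Q
  have hΔcard : Nat.card Δ = Nat.card Q := by
    have hinj : Function.Injective (Q.subtype.prod φ) := by
      intro a b h
      exact Subtype.ext (congrArg Prod.fst h)
    exact (Nat.card_congr (MonoidHom.ofInjective hinj).toEquiv).symm
  -- Step 4: `F ≃ N × C`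
  have hFNC : Nat.card F = Nat.card N * Nat.card C := by
    rw [← Nat.card_prod]
    refine Nat.card_congr ?_
    -- choice of witness for each element of N
    let y₀ : S → S := fun x => if h : x ∈ N then h.choose else 1
    have hy₀ : ∀ x (hx : x ∈ N), ∀ r : R,
        ∃ q : Q, (q : S) = x * r * x⁻¹ ∧ φ q = y₀ x * ψ r * (y₀ x)⁻¹ := by
      intro x hx r
      have : y₀ x = hx.choose := dif_pos hx
      rw [this]
      exact hx.choose_spec r
    have hCmem : ∀ (p : S × S), p ∈ F → (y₀ p.1)⁻¹ * p.2 ∈ C := by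
      intro p hp
      rw [hCdef, Subgroup.mem_centralizer_iff]
      rintro g ⟨r, rfl⟩
      have hp1 : p.1 ∈ N := ⟨p.2, hp⟩
      obtain ⟨q, hq1, hq2⟩ := hy₀ p.1 hp1 r
      obtain ⟨q', hq1', hq2'⟩ := hp r
      have hqq : q = q' := Subtype.ext (hq1.trans hq1'.symm)
      rw [hqq] at hq2
      -- hq2 : φ q' = y₀ p.1 * ψ r * (y₀ p.1)⁻¹, hq2' : φ q' = p.2 * ψ r * p.2⁻¹
      have key : y₀ p.1 * ψ r * (y₀ p.1)⁻¹ = p.2 * ψ r * p.2⁻¹ := hq2.symm.trans hq2'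
      calc ψ r * ((y₀ p.1)⁻¹ * p.2)
          = (y₀ p.1)⁻¹ * (y₀ p.1 * ψ r * (y₀ p.1)⁻¹) * p.2 := by group
        _ = (y₀ p.1)⁻¹ * (p.2 * ψ r * p.2⁻¹) * p.2 := by rw [key]
        _ = (y₀ p.1)⁻¹ * p.2 * ψ r := by group
    have hFmem : ∀ (x : N) (c : C), ((x : S), y₀ x * c) ∈ F := by
      intro x c r
      obtain ⟨q, hq1, hq2⟩ := hy₀ x x.2 r
      refine ⟨q, hq1, ?_⟩
      have hc : ψ r * (c : S) = (c : S) * ψ r := by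
        have := x.2
        exact (Subgroup.mem_centralizer_iff.mp c.2) (ψ r) ⟨r, rfl⟩
      rw [hq2]
      rw [mul_inv_rev]
      rw [show y₀ ↑x * ↑c * ψ ↑r * ((↑c)⁻¹ * (y₀ ↑x)⁻¹)
          = y₀ ↑x * (↑c * ψ ↑r * (↑c)⁻¹) * (y₀ ↑x)⁻¹ by group]
      rw [← hc]
      group
    refine ⟨fun p => (⟨p.1.1, p.1.2, p.2⟩, ⟨(y₀ p.1.1)⁻¹ * p.1.2, hCmem p.1 p.2⟩),
      fun xc => ⟨((xc.1 : S), y₀ xc.1 * xc.2), hFmem xc.1 xc.2⟩, ?_, ?_⟩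
    · rintro ⟨⟨x, y⟩, hp⟩
      simp only [Subtype.mk.injEq, Prod.mk.injEq]
      constructor
      · trivial
      · group
    · rintro ⟨⟨x, hx⟩, ⟨c, hc⟩⟩
      simp only [Prod.mk.injEq, Subtype.mk.injEq]
      constructor
      · trivial
      · group
  -- Put everything together
  have hcount : Nat.card Δ * Nat.card t = Nat.card F' := by
    rw [← Nat.card_prod, ← Nat.card_congr (QuotientGroup.preimageMkEquivSubgroupProdSet Δ t),
      hpre]
  calc Nat.card t * Nat.card Q = Nat.card Δ * Nat.card t := by rw [hΔcard, mul_comm]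
    _ = Nat.card F' := hcount
    _ = Nat.card F := hF'F
    _ = Nat.card N * Nat.card C := hFNC
end

section
/- Let S be a finite group, R ≤ S, and let α : S → S be an automorphism and ψ : R → S an injective homomorphism. Then the number of Δ_R^ψ-fixed points of the coset space (S × S)/Δ_S^α is |C_S(ψ(R))| if there exist x, y ∈ S with α(x r x⁻¹) = y ψ(r) y⁻¹ for all r ∈ R, and 0 otherwise. -/
section Aux
variable {S : Type*} [Group S] {R : Subgroup S} (α : S ≃* S) (ψ : R →* S)

private def quotEquivAux : ((S × S) ⧸ ((MonoidHom.id S).prod α.toMonoidHom).range) ≃ S where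
  toFun q := Quotient.liftOn' q (fun p => p.2 * (α p.1)⁻¹) (by
    intro a b hab
    rw [QuotientGroup.leftRel_apply] at hab
    obtain ⟨w, hw⟩ := hab
    have h1 : w = a.1⁻¹ * b.1 := congrArg Prod.fst hw
    have h2 : α w = a.2⁻¹ * b.2 := congrArg Prod.snd hw
    rw [h1, map_mul, map_inv] at h2
    show a.2 * (α a.1)⁻¹ = b.2 * (α b.1)⁻¹
    have hb : b.2 = a.2 * ((α a.1)⁻¹ * α b.1) := by rw [h2]; group
    rw [hb]; group)
  invFun s := QuotientGroup.mk (1, s)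
  left_inv q := by
    induction q using Quotient.inductionOn' with
    | h p =>
      show QuotientGroup.mk _ = QuotientGroup.mk _
      rw [QuotientGroup.eq]
      refine ⟨p.1, ?_⟩
      ext <;> simp [mul_assoc] <;> exact (by group : α p.1 = (p.2 * (α p.1)⁻¹)⁻¹ * p.2)
  right_inv s := by show s * (α 1)⁻¹ = s; simp

private lemma quotEquivAux_smul (g : S × S)
    (q : (S × S) ⧸ ((MonoidHom.id S).prod α.toMonoidHom).range) :
    quotEquivAux α (g • q) = g.2 * quotEquivAux α q * (α g.1)⁻¹ := by
  induction q using Quotient.inductionOn' with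
  | h p =>
    show quotEquivAux α (QuotientGroup.mk (g * p)) = _
    simp only [quotEquivAux, Equiv.coe_fn_mk, Quotient.liftOn'_mk]
    show (g * p).2 * (α (g * p).1)⁻¹ = _
    simp [map_mul, mul_assoc]

end Aux

open scoped Classical in
/-- The number of `Δ_R^ψ`-fixed points of `(S × S) ⧸ Δ_S^α` is `|C_S(ψ(R))|` if `ψ` is
`(S,S)`-subconjugate to `α`, and `0` otherwise. -/
theorem card_fixed_points_top_transitive_biset (S : Type*) [Group S] [Finite S]
    (R : Subgroup S) (α : S ≃* S) (ψ : R →* S) (hψ : Function.Injective ψ) :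
    Nat.card (MulAction.fixedPoints (↥(R.subtype.prod ψ).range)
        ((S × S) ⧸ ((MonoidHom.id S).prod α.toMonoidHom).range)) =
      if ∃ x y : S, ∀ r : R, α (x * r * x⁻¹) = y * ψ r * y⁻¹ then
        Nat.card (Subgroup.centralizer (ψ.range : Set S))
      else 0 := by
  have key : Nat.card (MulAction.fixedPoints (↥(R.subtype.prod ψ).range)
        ((S × S) ⧸ ((MonoidHom.id S).prod α.toMonoidHom).range)) =
      Nat.card {s : S // ∀ r : R, ψ r * s = s * α r} := by
    apply Nat.card_congr
    refine Equiv.subtypeEquiv (quotEquivAux α) ?_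
    intro q
    simp only [MulAction.mem_fixedPoints, Set.mem_setOf_eq]
    constructor
    · intro h r
      have h1 := h ⟨((r : S), ψ r), ⟨r, rfl⟩⟩
      have h2 := congrArg (quotEquivAux α) h1
      rw [show ((⟨((r : S), ψ r), ⟨r, rfl⟩⟩ : ↥(R.subtype.prod ψ).range) • q)
          = ((r : S), ψ r) • q from rfl, quotEquivAux_smul] at h2
      have h2' : ψ r * quotEquivAux α q * (α r)⁻¹ = quotEquivAux α q := h2
      conv_rhs => rw [← h2']
      group
    · intro h k
      obtain ⟨r, hr⟩ := k.2
      apply (quotEquivAux α).injective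
      rw [show (k • q) = (k : S × S) • q from rfl, ← hr]
      have : ((R.subtype.prod ψ) r) = ((r : S), ψ r) := rfl
      rw [this, quotEquivAux_smul]
      have h2' : ψ r * quotEquivAux α q * (α r)⁻¹ = quotEquivAux α q := by
        rw [h r]; group
      exact h2'
  rw [key]
  split_ifs with hcond
  · obtain ⟨x, y, hxy⟩ := hcond
    have hs₀ : ∀ r : R, ψ r * (y⁻¹ * α x) = (y⁻¹ * α x) * α r := by
      intro r
      have h := hxy r
      rw [show ((x : S) * r * x⁻¹) = x * r * x⁻¹ from rfl] at h
      have h' : α x * α r * (α x)⁻¹ = y * ψ r * y⁻¹ := by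
        rw [← h]; simp [map_mul]
      have hψr : (ψ r : S) = y⁻¹ * (α x * α r * (α x)⁻¹) * y := by rw [h']; group
      rw [hψr]; group
    apply Nat.card_congr
    refine ⟨fun s => ⟨s.1 * (y⁻¹ * α x)⁻¹, ?_⟩, fun c => ⟨c.1 * (y⁻¹ * α x), ?_⟩, ?_, ?_⟩
    · rw [Subgroup.mem_centralizer_iff]
      rintro g ⟨r, rfl⟩
      have h1 := s.2 r
      have h2 := hs₀ r
      have h3 : (α r : S) * (y⁻¹ * α x)⁻¹ = (y⁻¹ * α x)⁻¹ * ψ r := by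
        have h4 : (α r : S) = (y⁻¹ * α x)⁻¹ * (ψ r * (y⁻¹ * α x)) := by rw [h2]; group
        rw [h4]; group
      calc ψ r * (s.1 * (y⁻¹ * α x)⁻¹)
          = (ψ r * s.1) * (y⁻¹ * α x)⁻¹ := by rw [mul_assoc]
        _ = s.1 * ((α r : S) * (y⁻¹ * α x)⁻¹) := by rw [h1, mul_assoc]
        _ = s.1 * (y⁻¹ * α x)⁻¹ * ψ r := by rw [h3, mul_assoc]
    · intro r
      have hc := (Subgroup.mem_centralizer_iff.mp c.2) (ψ r) ⟨r, rfl⟩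
      rw [← mul_assoc, hc, mul_assoc, hs₀ r, ← mul_assoc]
    · intro s; ext; group
    · intro c; ext; group
  · rw [Nat.card_eq_zero]
    left
    refine ⟨fun s => hcond ⟨1, s.1⁻¹, fun r => ?_⟩⟩
    have h := s.2 r
    have h0 : (α ((1 : S) * r * 1⁻¹) : S) = α r := by norm_num
    rw [h0, inv_inv, mul_assoc, h]
    group
end
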